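/- For every integer n ≥ 2 and every odd integer m ≥ 3, the graph G on 3n + 3 vertices that is the disjoint union of three copies of the complete graph K_{n+1} contains no copy of K_{2,n}, and its complement, the complete tripartite graph with three parts of size n + 1, contains no copy of the wheel W_m. -/

import Mathlib

open SimpleGraph

/-- `ContainsCopy Γ H` : `Γ` contains a copy of `H`, i.e. `H` is isomorphic to a subgraph
of `Γ`; equivalently, there is an injective graph homomorphism from `H` to `Γ`. -/
def ContainsCopy {α β : Type*} (Γ : SimpleGraph α) (H : SimpleGraph β) : Prop :=
  ∃ f : H →g Γ, Function.Injective f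

/-- The wheel graph `W_m` on `m+1` vertices: the join of a single hub vertex (`none`)
with the cycle `C_m` (on the vertices `some i`). -/
def wheelGraph (m : ℕ) : SimpleGraph (Option (Fin m)) :=
  SimpleGraph.fromRel (fun x y =>
    x = none ∨ ∃ i j : Fin m, x = some i ∧ y = some j ∧ (SimpleGraph.cycleGraph m).Adj i j)

open scoped Fin.CommRing Fin.NatCast

/-- For every integer `n ≥ 2` and every odd integer `m ≥ 3`, the graph on `3n+3` vertices
that is the disjoint union of three copies of `K_{n+1}` contains no copy of `K_{2,n}`, and
its complement (the complete tripartite graph with parts of size `n+1`) contains no copy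
of the wheel `W_m`. -/
lemma fin3_aux : ∀ c0 p q r : Fin 3, p ≠ c0 → q ≠ c0 → r ≠ c0 → p ≠ q → q ≠ r → p = r := by
  intro c0 p q r h1 h2 h3 h4 h5
  have := c0.isLt; have := p.isLt; have := q.isLt; have := r.isLt
  simp only [Ne, Fin.ext_iff] at *
  omega

lemma cyc_adj_succ {m : ℕ} [NeZero m] (hm : 3 ≤ m) (x : Fin m) :
    (SimpleGraph.cycleGraph m).Adj x (x + 1) := by
  rw [SimpleGraph.cycleGraph_adj']
  right
  have : x + 1 - x = (1 : Fin m) := by ring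
  rw [this]
  have h : ((1 : Fin m) : ℕ) = 1 % m := rfl
  rw [h, Nat.mod_eq_of_lt (by omega)]

theorem statement1 (n m : ℕ) (hn : 2 ≤ n) (hm : 3 ≤ m) (hmodd : Odd m) :
    ¬ ContainsCopy (SimpleGraph.fromRel (fun x y : Fin 3 × Fin (n + 1) => x.1 = y.1))
        (completeBipartiteGraph (Fin 2) (Fin n)) ∧
    ¬ ContainsCopy (SimpleGraph.fromRel (fun x y : Fin 3 × Fin (n + 1) => x.1 = y.1))ᶜ
        (wheelGraph m) := by
  constructor
  · rintro ⟨f, hf⟩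
    -- all images share the same first coordinate
    have hadj : ∀ (a : Fin 2) (b : Fin n), (f (Sum.inl a)).1 = (f (Sum.inr b)).1 := by
      intro a b
      have h := f.map_adj (show (completeBipartiteGraph (Fin 2) (Fin n)).Adj
        (Sum.inl a) (Sum.inr b) by simp)
      rw [SimpleGraph.fromRel_adj] at h
      rcases h with ⟨-, h | h⟩ <;> simp [h]
    have key : ∀ v : Fin 2 ⊕ Fin n, (f v).1 = (f (Sum.inl 0)).1 := by
      rintro (a | b)
      · have h1 := hadj a ⟨0, by omega⟩
        have h2 := hadj 0 ⟨0, by omega⟩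
        rw [h1, ← h2]
      · exact (hadj 0 b).symm
    have hg : Function.Injective (fun v : Fin 2 ⊕ Fin n => (f v).2) := by
      intro u v huv
      apply hf
      have := key u
      rw [← key v] at this
      exact Prod.ext this huv
    have := Fintype.card_le_of_injective _ hg
    simp at this
    omega
  · haveI : NeZero m := ⟨by omega⟩
    rintro ⟨f, -⟩
    -- colors
    set c0 : Fin 3 := (f none).1 with hc0
    have hcompl : ∀ {x y : Option (Fin m)}, (wheelGraph m).Adj x y → (f x).1 ≠ (f y).1 := by
      intro x y hxy
      have h := f.map_adj hxy
      rw [SimpleGraph.compl_adj, SimpleGraph.fromRel_adj] at h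
      tauto
    have hhub : ∀ i : Fin m, (f (some i)).1 ≠ c0 := by
      intro i
      have : (wheelGraph m).Adj none (some i) := by
        rw [wheelGraph, SimpleGraph.fromRel_adj]
        exact ⟨by simp, Or.inl (Or.inl rfl)⟩
      exact (hcompl this).symm
    have hcyc : ∀ i j : Fin m, (SimpleGraph.cycleGraph m).Adj i j →
        (f (some i)).1 ≠ (f (some j)).1 := by
      intro i j hij
      apply hcompl
      rw [wheelGraph, SimpleGraph.fromRel_adj]
      refine ⟨by simp [hij.ne], Or.inl (Or.inr ⟨i, j, rfl, rfl, hij⟩)⟩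
    -- parity argument: c (2k) = c 0 for all k
    have step : ∀ x : Fin m, (f (some (x + 1 + 1))).1 = (f (some x)).1 := by
      intro x
      exact (fin3_aux c0 _ _ _ (hhub x) (hhub (x+1)) (hhub (x+1+1))
        (hcyc _ _ (cyc_adj_succ hm x)) (hcyc _ _ (cyc_adj_succ hm (x+1)))).symm
    have even_eq : ∀ k : ℕ, (f (some ((2 * k : ℕ) : Fin m))).1 = (f (some 0)).1 := by
      intro k
      induction k with
      | zero => norm_num
      | succ k ih =>
        have hcast : ((2 * (k+1) : ℕ) : Fin m) = ((2 * k : ℕ) : Fin m) + 1 + 1 := by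
          push_cast; ring
        rw [hcast, step, ih]
    -- take k = (m+1)/2, so 2k = m + 1 ≡ 1 mod m
    obtain ⟨t, ht⟩ := hmodd
    have h1 : ((2 * (t + 1) : ℕ) : Fin m) = (1 : Fin m) := by
      have : (2 * (t + 1) : ℕ) = m + 1 := by omega
      rw [this]
      push_cast
      simp
    have := even_eq (t + 1)
    rw [h1] at this
    have h01 : (f (some 0)).1 ≠ (f (some 1)).1 := by
      apply hcyc
      have := cyc_adj_succ hm (0 : Fin m)
      simpa using this
    exact h01 this.symm
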